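/- For all a ≥ 0, x ≥ 0, and n ≥ 1, the generalized Baskakov operator satisfies B_n^a(t; x) = x + ax/(n(1+x)), i.e., ∑_{k=0}^∞ W_{n,k}^a(x)·(k/n) = x + ax/(n(1+x)). -/

import Mathlib

noncomputable def rising (n i : ℕ) : ℝ := ∏ j ∈ Finset.range i, ((n : ℝ) + j)

noncomputable def pk (n : ℕ) (a : ℝ) (k : ℕ) : ℝ :=
  ∑ i ∈ Finset.range (k + 1), (k.choose i : ℝ) * rising n i * a ^ (k - i)

noncomputable def W (n : ℕ) (a x : ℝ) (k : ℕ) : ℝ :=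
  Real.exp (-(a * x) / (1 + x)) * (pk n a k / (k.factorial : ℝ)) * x ^ k / (1 + x) ^ (k + n)
lemma rising_succ (n i : ℕ) : rising n (i + 1) = rising n i * ((n : ℝ) + i) := by
  simp [rising, Finset.prod_range_succ]

lemma rising_succ' (n i : ℕ) : rising n (i + 1) = (n : ℝ) * rising (n + 1) i := by
  rw [rising, Finset.prod_range_succ', rising]
  simp only [Nat.cast_zero, add_zero, mul_comm]
  congr 1
  apply Finset.prod_congr rfl
  intro j _
  push_cast
  ring

lemma rising_eq (m : ℕ) : ∀ i, rising (m + 1) i = ((i + m).choose m : ℝ) * (i.factorial : ℝ) := by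
  intro i
  induction i with
  | zero => simp [rising]
  | succ i ih =>
    rw [rising_succ, ih]
    have h1 : (i + m).choose i = (i + m).choose m := by
      simpa using Nat.choose_symm (Nat.le_add_left m i)
    have h4 : (i + m + 1).choose (i + 1) = (i + m + 1).choose m := by
      simpa using (Nat.choose_symm (show i + 1 ≤ i + m + 1 by omega)).symm
    have h3 := Nat.add_one_mul_choose_eq (i + m) i
    have key : (i + 1 + m).choose m * (i + 1) = (i + m + 1) * (i + m).choose m := by
      rw [show i + 1 + m = i + m + 1 by omega, ← h4, ← h1]
      exact h3.symm
    have keyR : ((i + 1 + m).choose m : ℝ) * ((i : ℝ) + 1) = ((i : ℝ) + (m : ℝ) + 1) * ((i + m).choose m : ℝ) := by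
      exact_mod_cast key
    rw [Nat.factorial_succ]
    push_cast
    linear_combination -(i.factorial : ℝ) * keyR

noncomputable def Afun (m : ℕ) (t : ℝ) (i : ℕ) : ℝ := rising (m + 1) i / i.factorial * t ^ i
noncomputable def Bfun (c : ℝ) (j : ℕ) : ℝ := c ^ j / j.factorial

lemma hasSum_A (m : ℕ) {t : ℝ} (ht : |t| < 1) :
    HasSum (Afun m t) (1 / (1 - t) ^ (m + 1)) := by
  have h := hasSum_choose_mul_geometric_of_norm_lt_one (𝕜 := ℝ) m (r := t)
    (by simpa [Real.norm_eq_abs] using ht)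
  have he : Afun m t = fun i : ℕ => ((i + m).choose m : ℝ) * t ^ i := by
    funext i
    rw [Afun, rising_eq, mul_div_assoc, div_self (by exact_mod_cast i.factorial_ne_zero), mul_one]
  rw [he]
  exact h

lemma hasSum_A' (m : ℕ) {t : ℝ} (ht : |t| < 1) :
    HasSum (fun i : ℕ => (i : ℝ) * Afun m t i)
      (((m : ℝ) + 1) * t * (1 / (1 - t) ^ (m + 2))) := by
  have h := (hasSum_A (m + 1) ht).mul_left (((m : ℝ) + 1) * t)
  have h2 : (fun j : ℕ => ((m : ℝ) + 1) * t * Afun (m + 1) t j)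
      = fun j : ℕ => ((j + 1 : ℕ) : ℝ) * Afun m t (j + 1) := by
    funext j
    rw [Afun, Afun, rising_succ', Nat.factorial_succ]
    have hj : (j.factorial : ℝ) ≠ 0 := by exact_mod_cast j.factorial_ne_zero
    push_cast
    field_simp
    ring
  rw [h2] at h
  have h3 := (hasSum_nat_add_iff (f := fun i : ℕ => (i : ℝ) * Afun m t i) 1).mp h
  simpa using h3

lemma hasSum_B (c : ℝ) : HasSum (Bfun c) (Real.exp c) := by
  rw [Real.exp_eq_exp_ℝ]
  exact NormedSpace.expSeries_div_hasSum_exp c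

lemma hasSum_B' (c : ℝ) :
    HasSum (fun j : ℕ => (j : ℝ) * Bfun c j) (c * Real.exp c) := by
  have h := (hasSum_B c).mul_left c
  have h2 : (fun j : ℕ => c * Bfun c j) = fun j : ℕ => ((j + 1 : ℕ) : ℝ) * Bfun c (j + 1) := by
    funext j
    rw [Bfun, Bfun, Nat.factorial_succ]
    have hj : (j.factorial : ℝ) ≠ 0 := by exact_mod_cast j.factorial_ne_zero
    push_cast
    field_simp
    ring
  rw [h2] at h
  have h3 := (hasSum_nat_add_iff (f := fun j : ℕ => (j : ℝ) * Bfun c j) 1).mp h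
  simpa using h3


theorem baskakov_first_moment (a x : ℝ) (ha : 0 ≤ a) (hx : 0 ≤ x)
    (n : ℕ) (hn : 1 ≤ n) :
    ∑' k : ℕ, W n a x k * ((k : ℝ) / n) = x + a * x / (n * (1 + x)) := by
  obtain ⟨m, rfl⟩ : ∃ m, n = m + 1 := ⟨n - 1, by omega⟩
  have hy : (0:ℝ) < 1 + x := by linarith
  set t := x / (1 + x) with htdef
  have ht0 : 0 ≤ t := div_nonneg hx hy.le
  have ht1 : t < 1 := (div_lt_one hy).mpr (by linarith)
  have htabs : |t| < 1 := abs_lt.mpr ⟨by linarith, ht1⟩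
  have h1t : 1 - t = 1 / (1 + x) := by
    rw [htdef]; field_simp; ring
  set E := Real.exp (-(a * x) / (1 + x)) with hEdef
  have hWk : ∀ k : ℕ, W (m + 1) a x k * ((k : ℝ) / ((m : ℕ) + 1 : ℕ)) =
      (E / (((m : ℝ) + 1) * (1 + x) ^ (m + 1))) *
        ((k : ℝ) * (pk (m + 1) a k / k.factorial * t ^ k)) := by
    intro k
    rw [W]
    have hxk : x ^ k = t ^ k * (1 + x) ^ k := by
      rw [htdef, div_pow]
      field_simp
    rw [hxk, pow_add]
    have hfk : (k.factorial : ℝ) ≠ 0 := by exact_mod_cast k.factorial_ne_zero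
    have hyx : (1 + x) ^ k ≠ 0 := pow_ne_zero _ hy.ne'
    have hyx2 : (1 + x) ^ (m + 1) ≠ 0 := pow_ne_zero _ hy.ne'
    have hm1 : ((m : ℝ) + 1) ≠ 0 := by positivity
    push_cast
    field_simp
    rw [hEdef, neg_div, div_eq_mul_inv]
    ring
  rw [tsum_congr hWk, tsum_mul_left]
  -- key pointwise identity
  have hkey : ∀ k : ℕ, (k : ℝ) * (pk (m + 1) a k / k.factorial * t ^ k) =
      (∑ ij ∈ Finset.HasAntidiagonal.antidiagonal k, ((ij.1 : ℝ) * Afun m t ij.1) * Bfun (a * t) ij.2)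
      + (∑ ij ∈ Finset.HasAntidiagonal.antidiagonal k, Afun m t ij.1 * ((ij.2 : ℝ) * Bfun (a * t) ij.2)) := by
    intro k
    rw [← Finset.sum_add_distrib]
    have hstep : ∀ ij ∈ Finset.HasAntidiagonal.antidiagonal k,
        ((ij.1 : ℝ) * Afun m t ij.1) * Bfun (a * t) ij.2
          + Afun m t ij.1 * ((ij.2 : ℝ) * Bfun (a * t) ij.2)
        = (k : ℝ) * (Afun m t ij.1 * Bfun (a * t) ij.2) := by
      intro ij hij
      have h := Finset.HasAntidiagonal.mem_antidiagonal.mp hij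
      have h' : ((ij.1 : ℝ) + ij.2) = (k : ℝ) := by exact_mod_cast congrArg Nat.cast h
      rw [← h']
      ring
    rw [Finset.sum_congr rfl hstep, ← Finset.mul_sum]
    congr 1
    rw [Finset.Nat.sum_antidiagonal_eq_sum_range_succ_mk, pk, Finset.sum_div, Finset.sum_mul]
    apply Finset.sum_congr rfl
    intro i hi
    have hik : i ≤ k := Nat.lt_succ_iff.mp (Finset.mem_range.mp hi)
    rw [Afun, Bfun]
    have hfac : (k.choose i : ℝ) * (i.factorial : ℝ) * ((k - i).factorial : ℝ)
        = (k.factorial : ℝ) := by exact_mod_cast Nat.choose_mul_factorial_mul_factorial hik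
    have htk : t ^ k = t ^ i * t ^ (k - i) := by
      rw [← pow_add]
      congr 1
      omega
    rw [htk, mul_pow]
    have h1 : (i.factorial : ℝ) ≠ 0 := by exact_mod_cast i.factorial_ne_zero
    have h2 : ((k - i).factorial : ℝ) ≠ 0 := by exact_mod_cast (k - i).factorial_ne_zero
    have h3 : (k.factorial : ℝ) ≠ 0 := by exact_mod_cast k.factorial_ne_zero
    field_simp
    linear_combination rising (m + 1) i * a ^ (k - i) * t ^ i * t ^ (k - i) * hfac
  rw [tsum_congr hkey]
  -- summability
  have hA := hasSum_A m htabs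
  have hA' := hasSum_A' m htabs
  have hB := hasSum_B (a * t)
  have hB' := hasSum_B' (a * t)
  have sA : Summable fun i => ‖Afun m t i‖ := summable_norm_iff.mpr hA.summable
  have sA' : Summable fun i : ℕ => ‖(i : ℝ) * Afun m t i‖ := summable_norm_iff.mpr hA'.summable
  have sB : Summable fun j => ‖Bfun (a * t) j‖ := summable_norm_iff.mpr hB.summable
  have sB' : Summable fun j : ℕ => ‖(j : ℝ) * Bfun (a * t) j‖ := summable_norm_iff.mpr hB'.summable
  rw [Summable.tsum_add
    (summable_sum_mul_antidiagonal_of_summable_norm' sA' hA'.summable sB hB.summable)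
    (summable_sum_mul_antidiagonal_of_summable_norm' sA hA.summable sB' hB'.summable),
    ← tsum_mul_tsum_eq_tsum_sum_antidiagonal_of_summable_norm sA' sB,
    ← tsum_mul_tsum_eq_tsum_sum_antidiagonal_of_summable_norm sA sB',
    hA.tsum_eq, hA'.tsum_eq, hB.tsum_eq, hB'.tsum_eq]
  -- final arithmetic
  have e1 : (1:ℝ) / (1 - t) ^ (m + 2) = (1 + x) ^ (m + 2) := by
    rw [h1t, one_div, one_div, inv_pow, inv_inv]
  have e2 : (1:ℝ) / (1 - t) ^ (m + 1) = (1 + x) ^ (m + 1) := by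
    rw [h1t, one_div, one_div, inv_pow, inv_inv]
  rw [e1, e2]
  have hexp2 : Real.exp (a * t) = E⁻¹ := by
    rw [hEdef, ← Real.exp_neg]
    congr 1
    rw [htdef]
    field_simp
  rw [hexp2]
  have hEne : E ≠ 0 := Real.exp_ne_zero _
  have hm1 : ((m : ℝ) + 1) ≠ 0 := by positivity
  rw [htdef]
  push_cast
  field_simp
  ring
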